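/- Let T be a finite non-abelian simple group and let the group T × T act on the set T by (a, b)·x = a x b⁻¹. Then this action is IBIS (all irredundant bases have the same length) if and only if T is a CT-group. -/

import Mathlib

/-- A group is a CT-group if commutativity is a transitive relation on its
non-identity elements. -/
def IsCTGroup (G : Type*) [Group G] : Prop :=
  ∀ a b c : G, a ≠ 1 → b ≠ 1 → c ≠ 1 → Commute a b → Commute b c → Commute a c

/-- The action of `T × T` on `T` given by `(a, b) • x = a * x * b⁻¹`. -/
instance diagAction (T : Type*) [Group T] : MulAction (T × T) T where
  smul p x := p.1 * x * p.2⁻¹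
  one_smul x := by
    show (1 : T) * x * (1 : T)⁻¹ = x
    group
  mul_smul p q x := by
    show (p.1 * q.1) * x * (p.2 * q.2)⁻¹ = p.1 * (q.1 * x * q.2⁻¹) * p.2⁻¹
    group

/-- The pointwise stabilizer of (the points in) a list. -/
def seqStabilizer (G : Type*) [Group G] {Ω : Type*} [MulAction G Ω] (l : List Ω) :
    Subgroup G :=
  ⨅ ω ∈ l, MulAction.stabilizer G ω

/-- A sequence `(ω_1, …, ω_t)` is irredundant if each pointwise stabilizer of an
initial segment strictly contains the pointwise stabilizer of the next initial
segment. -/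
def IsIrredundantSeq (G : Type*) [Group G] {Ω : Type*} [MulAction G Ω] (l : List Ω) :
    Prop :=
  ∀ i < l.length, seqStabilizer G (l.take (i + 1)) < seqStabilizer G (l.take i)

/-- An irredundant base is an irredundant sequence whose pointwise stabilizer is
trivial. -/
def IsIrredundantBase (G : Type*) [Group G] {Ω : Type*} [MulAction G Ω] (l : List Ω) :
    Prop :=
  IsIrredundantSeq G l ∧ seqStabilizer G l = ⊥

/-- `G` is IBIS if all irredundant bases have the same length. -/
def IsIBIS (G : Type*) [Group G] (Ω : Type*) [MulAction G Ω] : Prop :=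
  ∀ l₁ l₂ : List Ω, IsIrredundantBase G l₁ → IsIrredundantBase G l₂ →
    l₁.length = l₂.length

namespace DiagIBIS

variable {T : Type*} [Group T]

lemma diag_smul (p : T × T) (x : T) : p • x = p.1 * x * p.2⁻¹ := rfl

lemma mem_seqStab {l : List T} {p : T × T} :
    p ∈ seqStabilizer (T × T) l ↔ ∀ x ∈ l, p.1 * x * p.2⁻¹ = x := by
  simp only [seqStabilizer, Subgroup.mem_iInf, MulAction.mem_stabilizer_iff, diag_smul]

/-- If `p` fixes `x₀`, then `p` fixes `x` iff `p.2` commutes with `x₀⁻¹ * x`. -/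
lemma fix_iff {p : T × T} {x₀ x : T} (h₀ : p.1 * x₀ * p.2⁻¹ = x₀) :
    p.1 * x * p.2⁻¹ = x ↔ Commute p.2 (x₀⁻¹ * x) := by
  have hp1 : p.1 = x₀ * p.2 * x₀⁻¹ := by
    rw [eq_mul_inv_iff_mul_eq]
    exact mul_inv_eq_iff_eq_mul.mp h₀
  rw [hp1, commute_iff_eq]
  constructor
  · intro h
    have h' : x₀ * p.2 * x₀⁻¹ * x = x * p.2 := mul_inv_eq_iff_eq_mul.mp h
    have key : p.2 * (x₀⁻¹ * x) = x₀⁻¹ * (x₀ * p.2 * x₀⁻¹ * x) := by group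
    rw [h'] at key
    rw [key]
    group
  · intro h
    calc x₀ * p.2 * x₀⁻¹ * x * p.2⁻¹
        = x₀ * (p.2 * (x₀⁻¹ * x)) * p.2⁻¹ := by group
      _ = x₀ * (x₀⁻¹ * x * p.2) * p.2⁻¹ := by rw [h]
      _ = x := by group

/-- a simple conjugation computation -/
lemma diagfix_iff {w x : T} : w * x * w⁻¹ = x ↔ Commute w x := by
  rw [commute_iff_eq, mul_inv_eq_iff_eq_mul]

lemma fix_one_iff {p : T × T} : p.1 * (1 : T) * p.2⁻¹ = 1 ↔ p.1 = p.2 := by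
  rw [mul_one, mul_inv_eq_one]

/-- the CT → all bases have length 3 lemma -/
lemma ct_base_length [Nontrivial T] (hCT : IsCTGroup T)
    (l : List T) (hb : IsIrredundantBase (T × T) l) : l.length = 3 := by
  obtain ⟨hseq, hbot⟩ := hb
  obtain ⟨t, ht⟩ := exists_ne (1 : T)
  rcases l with _ | ⟨x₀, _ | ⟨x₁, _ | ⟨x₂, _ | ⟨x₃, rest⟩⟩⟩⟩
  · -- empty list : stabilizer is ⊤ ≠ ⊥
    exfalso
    have hmem : ((t, 1) : T × T) ∈ seqStabilizer (T × T) ([] : List T) := by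
      rw [mem_seqStab]; intro x hx; simp at hx
    rw [hbot, Subgroup.mem_bot] at hmem
    exact ht (congrArg Prod.fst hmem)
  · -- singleton
    exfalso
    have hmem : ((x₀ * t * x₀⁻¹, t) : T × T) ∈ seqStabilizer (T × T) [x₀] := by
      rw [mem_seqStab]
      intro x hx
      simp only [List.mem_singleton] at hx
      subst hx
      group
    rw [hbot, Subgroup.mem_bot] at hmem
    exact ht (congrArg Prod.snd hmem)
  · -- two elements
    exfalso
    by_cases hd : x₀⁻¹ * x₁ = 1
    · -- x₁ = x₀, so the stabilizers of the two prefixes coincide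
      have hx : x₁ = x₀ := (inv_mul_eq_one.mp hd).symm
      have h1 : seqStabilizer (T × T) [x₀, x₁] < seqStabilizer (T × T) [x₀] := by
        have := hseq 1 (by simp)
        rwa [show ([x₀, x₁] : List T).take 2 = [x₀, x₁] from rfl,
          show ([x₀, x₁] : List T).take 1 = [x₀] from rfl] at this
      have heq : seqStabilizer (T × T) [x₀, x₁] = seqStabilizer (T × T) [x₀] := by
        rw [hx]
        ext p
        rw [mem_seqStab, mem_seqStab]
        constructor
        · intro h x hmem
          apply h
          simp only [List.mem_cons, List.mem_singleton, List.not_mem_nil] at hmem ⊢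
          tauto
        · intro h x hmem
          apply h
          simp only [List.mem_cons, List.mem_singleton, List.not_mem_nil] at hmem ⊢
          tauto
      exact lt_irrefl _ (heq ▸ h1)
    · set d : T := x₀⁻¹ * x₁ with hdd
      have hmem : ((x₀ * d * x₀⁻¹, d) : T × T) ∈ seqStabilizer (T × T) [x₀, x₁] := by
        rw [mem_seqStab]
        have h₀ : (x₀ * d * x₀⁻¹) * x₀ * d⁻¹ = x₀ := by group
        intro x hx
        simp only [List.mem_cons, List.mem_singleton, List.not_mem_nil, or_false] at hx
        rcases hx with h' | h'
        · subst h'; exact h₀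
        · subst h'
          exact (fix_iff (p := (x₀ * d * x₀⁻¹, d)) h₀).mpr (Commute.refl d)
      rw [hbot, Subgroup.mem_bot] at hmem
      exact hd (congrArg Prod.snd hmem)
  · -- three elements : done
    rfl
  · -- at least four elements : contradiction with CT
    exfalso
    set l : List T := x₀ :: x₁ :: x₂ :: x₃ :: rest with hl
    have hlen : 4 ≤ l.length := by simp [hl]
    -- strictness at i = 1
    have h1 : seqStabilizer (T × T) [x₀, x₁] < seqStabilizer (T × T) [x₀] := by
      have := hseq 1 (by simp [hl])
      rwa [show l.take 2 = [x₀, x₁] from rfl, show l.take 1 = [x₀] from rfl] at this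
    have h2 : seqStabilizer (T × T) [x₀, x₁, x₂] < seqStabilizer (T × T) [x₀, x₁] := by
      have := hseq 2 (by simp [hl])
      rwa [show l.take 3 = [x₀, x₁, x₂] from rfl, show l.take 2 = [x₀, x₁] from rfl] at this
    have h3 : seqStabilizer (T × T) [x₀, x₁, x₂, x₃] < seqStabilizer (T × T) [x₀, x₁, x₂] := by
      have := hseq 3 (by simp [hl])
      rwa [show l.take 4 = [x₀, x₁, x₂, x₃] from rfl,
        show l.take 3 = [x₀, x₁, x₂] from rfl] at this
    -- witness from h1 : gives x₀⁻¹ * x₁ ≠ 1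
    obtain ⟨-, u, humem, hunot⟩ := SetLike.lt_iff_le_and_exists.mp h1
    have hu0 : u.1 * x₀ * u.2⁻¹ = x₀ := (mem_seqStab.mp humem) x₀ (by simp)
    have hux1 : ¬ (u.1 * x₁ * u.2⁻¹ = x₁) := by
      intro hfix
      apply hunot
      rw [mem_seqStab]
      intro x hx
      simp only [List.mem_cons, List.mem_singleton, List.not_mem_nil, or_false] at hx
      rcases hx with h' | h' <;> subst h'
      · exact hu0
      · exact hfix
    have d1ne : x₀⁻¹ * x₁ ≠ 1 := by
      intro h
      apply hux1
      rw [fix_iff hu0, h]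
      exact Commute.one_right _
    -- witness from h2
    obtain ⟨-, p, hpmem, hpnot⟩ := SetLike.lt_iff_le_and_exists.mp h2
    have hp0 : p.1 * x₀ * p.2⁻¹ = x₀ := (mem_seqStab.mp hpmem) x₀ (by simp)
    have hp1 : p.1 * x₁ * p.2⁻¹ = x₁ := (mem_seqStab.mp hpmem) x₁ (by simp)
    have hpc1 : Commute p.2 (x₀⁻¹ * x₁) := (fix_iff hp0).mp hp1
    have hpx2 : ¬ (p.1 * x₂ * p.2⁻¹ = x₂) := by
      intro hfix
      apply hpnot
      rw [mem_seqStab]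
      intro x hx
      simp only [List.mem_cons, List.mem_singleton, List.not_mem_nil, or_false] at hx
      rcases hx with h' | h' | h' <;> subst h'
      · exact hp0
      · exact hp1
      · exact hfix
    have hpc2 : ¬ Commute p.2 (x₀⁻¹ * x₂) := fun h => hpx2 ((fix_iff hp0).mpr h)
    have hp2ne : p.2 ≠ 1 := by
      intro h
      apply hpc2
      rw [h]
      exact Commute.one_left _
    have d2ne : x₀⁻¹ * x₂ ≠ 1 := by
      intro h
      apply hpc2
      rw [h]
      exact Commute.one_right _
    -- witness from h3
    obtain ⟨-, q, hqmem, hqnot⟩ := SetLike.lt_iff_le_and_exists.mp h3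
    have hq0 : q.1 * x₀ * q.2⁻¹ = x₀ := (mem_seqStab.mp hqmem) x₀ (by simp)
    have hq1 : q.1 * x₁ * q.2⁻¹ = x₁ := (mem_seqStab.mp hqmem) x₁ (by simp)
    have hq2 : q.1 * x₂ * q.2⁻¹ = x₂ := (mem_seqStab.mp hqmem) x₂ (by simp)
    have hqc1 : Commute q.2 (x₀⁻¹ * x₁) := (fix_iff hq0).mp hq1
    have hqc2 : Commute q.2 (x₀⁻¹ * x₂) := (fix_iff hq0).mp hq2
    have hqne : q ≠ 1 := fun h => hqnot (h ▸ Subgroup.one_mem _)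
    have hq2ne : q.2 ≠ 1 := by
      intro h
      apply hqne
      have h1' : q.1 = 1 := by
        rw [h, inv_one, mul_one] at hq0
        exact mul_eq_right.mp hq0
      exact Prod.ext h1' h
    -- CT gives a contradiction
    have hpq : Commute p.2 q.2 :=
      hCT p.2 (x₀⁻¹ * x₁) q.2 hp2ne d1ne hq2ne hpc1 hqc1.symm
    exact hpc2 (hCT p.2 q.2 (x₀⁻¹ * x₂) hp2ne hq2ne d2ne hpq hqc2)

def cent (r : List T) : Subgroup T := ⨅ x ∈ r, Subgroup.centralizer {x}

lemma mem_cent {r : List T} {w : T} : w ∈ cent r ↔ ∀ x ∈ r, Commute x w := by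
  simp only [cent, Subgroup.mem_iInf, Subgroup.mem_centralizer_iff,
    Set.mem_singleton_iff, forall_eq, commute_iff_eq]

lemma cent_nil : cent ([] : List T) = ⊤ := by
  ext w; simp [mem_cent]

lemma cent_snoc (r : List T) (x : T) :
    cent (r ++ [x]) = cent r ⊓ Subgroup.centralizer {x} := by
  ext w
  simp only [mem_cent, Subgroup.mem_inf, List.mem_append, List.mem_singleton]
  constructor
  · intro h
    refine ⟨fun y hy => h y (Or.inl hy), ?_⟩
    rw [Subgroup.mem_centralizer_iff]
    intro g hg
    rw [Set.mem_singleton_iff] at hg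
    rw [show g = x from hg]
    exact (h x (Or.inr rfl)).eq
  · rintro ⟨h1, h2⟩ y hy
    rcases hy with hy | rfl
    · exact h1 y hy
    · rw [Subgroup.mem_centralizer_iff] at h2
      exact commute_iff_eq _ _ |>.mpr (h2 y rfl)

lemma cent_singleton (x : T) : cent [x] = Subgroup.centralizer {x} := by
  have := cent_snoc ([] : List T) x
  simpa [cent_nil] using this


lemma mem_stab_one_cons {r : List T} {p : T × T} :
    p ∈ seqStabilizer (T × T) ((1 : T) :: r) ↔ p.1 = p.2 ∧ p.2 ∈ cent r := by
  rw [mem_seqStab]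
  constructor
  · intro h
    have h1 : p.1 = p.2 := fix_one_iff.mp (h 1 (by simp))
    refine ⟨h1, mem_cent.mpr fun x hx => ?_⟩
    have := h x (by simp [hx])
    rw [h1] at this
    exact (diagfix_iff.mp this).symm
  · rintro ⟨h1, h2⟩ x hx
    simp only [List.mem_cons] at hx
    rcases hx with rfl | hx
    · exact fix_one_iff.mpr h1
    · rw [h1]
      exact diagfix_iff.mpr ((mem_cent.mp h2) x hx).symm

lemma stab_le_iff {r s : List T} :
    seqStabilizer (T × T) ((1 : T) :: r) ≤ seqStabilizer (T × T) ((1 : T) :: s) ↔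
      cent r ≤ cent s := by
  constructor
  · intro h w hw
    have := h (mem_stab_one_cons.mpr ⟨rfl, hw⟩ : ((w, w) : T × T) ∈ _)
    exact (mem_stab_one_cons.mp this).2
  · intro h p hp
    obtain ⟨h1, h2⟩ := mem_stab_one_cons.mp hp
    exact mem_stab_one_cons.mpr ⟨h1, h h2⟩

lemma stab_lt_iff {r s : List T} :
    seqStabilizer (T × T) ((1 : T) :: r) < seqStabilizer (T × T) ((1 : T) :: s) ↔
      cent r < cent s := by
  rw [lt_iff_le_not_ge, lt_iff_le_not_ge, stab_le_iff, stab_le_iff]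

lemma stab_bot_iff {r : List T} :
    seqStabilizer (T × T) ((1 : T) :: r) = ⊥ ↔ cent r = ⊥ := by
  constructor
  · intro h
    rw [Subgroup.eq_bot_iff_forall]
    intro w hw
    have : ((w, w) : T × T) ∈ seqStabilizer (T × T) ((1 : T) :: r) :=
      mem_stab_one_cons.mpr ⟨rfl, hw⟩
    rw [h, Subgroup.mem_bot] at this
    exact congrArg Prod.snd this
  · intro h
    rw [Subgroup.eq_bot_iff_forall]
    intro p hp
    obtain ⟨h1, h2⟩ := mem_stab_one_cons.mp hp
    rw [h, Subgroup.mem_bot] at h2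
    exact Prod.ext (h1.trans h2) h2

def CentSeq (r : List T) : Prop :=
  ∀ j < r.length, cent (r.take (j + 1)) < cent (r.take j)

lemma stab_one_lt_top [Nontrivial T] :
    seqStabilizer (T × T) [(1 : T)] < seqStabilizer (T × T) ([] : List T) := by
  obtain ⟨t, ht⟩ := exists_ne (1 : T)
  rw [SetLike.lt_iff_le_and_exists]
  constructor
  · intro p hp
    rw [mem_seqStab]
    intro x hx
    simp at hx
  · refine ⟨((t, 1) : T × T), by rw [mem_seqStab]; intro x hx; simp at hx, ?_⟩
    intro hmem
    have := (mem_seqStab.mp hmem) 1 (by simp)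
    rw [mul_one, inv_one, mul_one] at this
    exact ht this

lemma isIrredundantSeq_one_cons [Nontrivial T] {r : List T} (h : CentSeq r) :
    IsIrredundantSeq (T × T) ((1 : T) :: r) := by
  intro i hi
  match i with
  | 0 =>
    rw [show ((1 : T) :: r).take 1 = [(1 : T)] from rfl,
      show ((1 : T) :: r).take 0 = ([] : List T) from rfl]
    exact stab_one_lt_top
  | (j + 1) =>
    rw [show ((1 : T) :: r).take (j + 1 + 1) = (1 : T) :: r.take (j + 1) from rfl,
      show ((1 : T) :: r).take (j + 1) = (1 : T) :: r.take j from rfl]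
    rw [stab_lt_iff]
    exact h j (by simpa using hi)

lemma centSeq_snoc {r : List T} {x : T} (hr : CentSeq r)
    (hx : cent (r ++ [x]) < cent r) : CentSeq (r ++ [x]) := by
  intro j hj
  rw [List.length_append, List.length_singleton] at hj
  rcases Nat.lt_or_ge j r.length with h | h
  · have e1 : (r ++ [x]).take (j + 1) = r.take (j + 1) :=
      List.take_append_of_le_length (by omega)
    have e2 : (r ++ [x]).take j = r.take j :=
      List.take_append_of_le_length (by omega)
    rw [e1, e2]
    exact hr j h
  · have hjeq : j = r.length := by omega
    subst hjeq
    have e1 : (r ++ [x]).take (r.length + 1) = r ++ [x] := by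
      apply List.take_of_length_le
      simp
    have e2 : (r ++ [x]).take r.length = r := List.take_left
    rw [e1, e2]
    exact hx

lemma centSeq_nil : CentSeq ([] : List T) := by
  intro j hj
  simp at hj

lemma centralizer_eq_top_iff {u : T} :
    Subgroup.centralizer {u} = ⊤ ↔ u ∈ Subgroup.center T := by
  constructor
  · intro h
    rw [Subgroup.mem_center_iff]
    intro g
    have : g ∈ Subgroup.centralizer {u} := by rw [h]; trivial
    rw [Subgroup.mem_centralizer_iff] at this
    exact (this u rfl).symm
  · intro h
    rw [eq_top_iff]
    intro g _
    rw [Subgroup.mem_centralizer_iff]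
    intro y hy
    rw [Set.mem_singleton_iff] at hy
    rw [show y = u from hy]
    exact (Subgroup.mem_center_iff.mp h g).symm

lemma centralizer_lt_top (hZ : Subgroup.center T = ⊥) {u : T} (hu : u ≠ 1) :
    Subgroup.centralizer {u} < ⊤ := by
  rcases lt_or_eq_of_le (le_top : Subgroup.centralizer {u} ≤ ⊤) with h | h
  · exact h
  · exfalso
    have := centralizer_eq_top_iff.mp h
    rw [hZ, Subgroup.mem_bot] at this
    exact hu this

lemma mem_centralizer_singleton_iff {u w : T} :
    w ∈ Subgroup.centralizer {u} ↔ Commute u w := by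
  rw [Subgroup.mem_centralizer_iff, commute_iff_eq]
  constructor
  · intro h; exact h u rfl
  · intro h y hy
    rw [Set.mem_singleton_iff] at hy
    rw [show y = u from hy]
    exact h

/-- greedy extension to trivial stabilizer, at the centralizer level -/
lemma exists_cent_bot [Finite T] (hZ : Subgroup.center T = ⊥) :
    ∀ (N : ℕ) (r : List T), CentSeq r → Nat.card (cent r) ≤ N →
      ∃ e : List T, CentSeq (r ++ e) ∧ cent (r ++ e) = ⊥ ∧
        (cent r ≠ ⊥ → r.length < (r ++ e).length) := by
  intro N
  induction N with
  | zero =>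
    intro r hr hcard
    exfalso
    have : 0 < Nat.card (cent r) := Nat.card_pos
    omega
  | succ n ih =>
    intro r hr hcard
    by_cases hb : cent r = ⊥
    · exact ⟨[], by simpa using hr, by simpa using hb, fun h => absurd hb h⟩
    · -- pick a nontrivial element and a non-commuting partner
      have hex : ∃ w ∈ cent r, w ≠ (1 : T) := by
        by_contra h
        push_neg at h
        exact hb ((Subgroup.eq_bot_iff_forall _).mpr h)
      obtain ⟨w, hw, hwne⟩ := hex
      have hgex : ∃ g : T, ¬ Commute g w := by
        by_contra h
        push_neg at h
        have : w ∈ Subgroup.center T := by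
          rw [Subgroup.mem_center_iff]
          intro g
          exact (h g).eq
        rw [hZ, Subgroup.mem_bot] at this
        exact hwne this
      obtain ⟨g, hg⟩ := hgex
      have hlt : cent (r ++ [g]) < cent r := by
        rw [cent_snoc]
        rcases lt_or_eq_of_le (inf_le_left : cent r ⊓ Subgroup.centralizer {g} ≤ cent r)
          with h | h
        · exact h
        · exfalso
          apply hg
          have : w ∈ cent r ⊓ Subgroup.centralizer {g} := by rw [h]; exact hw
          exact mem_centralizer_singleton_iff.mp this.2
      have hcard' : Nat.card (cent (r ++ [g])) ≤ n := by
        have hmono : Nat.card (cent (r ++ [g])) < Nat.card (cent r) := by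
          have hss : ((cent (r ++ [g]) : Subgroup T) : Set T) ⊂
              ((cent r : Subgroup T) : Set T) := by
            rw [Set.ssubset_def]
            refine ⟨fun z hz => le_of_lt hlt hz, fun hcon => ?_⟩
            obtain ⟨-, p, hp, hpn⟩ := SetLike.lt_iff_le_and_exists.mp hlt
            exact hpn (hcon hp)
          have := Set.ncard_lt_ncard hss (Set.toFinite _)
          rwa [← Nat.card_coe_set_eq, ← Nat.card_coe_set_eq] at this
        omega
      obtain ⟨e, he1, he2, -⟩ := ih (r ++ [g]) (centSeq_snoc hr hlt) hcard'
      refine ⟨[g] ++ e, by rwa [← List.append_assoc], by rwa [← List.append_assoc], ?_⟩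
      intro _
      simp

/-- greedy descent to a self-centralizing abelian subgroup -/
lemma exists_cent_eq [Finite T] (B : Subgroup T)
    (hcomm : ∀ x ∈ B, ∀ y ∈ B, Commute x y)
    (hsc : ∀ w : T, (∀ b ∈ B, Commute w b) → w ∈ B) :
    ∃ r : List T, CentSeq r ∧ cent r = B := by
  suffices h : ∀ (N : ℕ) (r : List T), CentSeq r → B ≤ cent r → (∀ x ∈ r, x ∈ B) →
      Nat.card (cent r) ≤ N → ∃ e : List T, CentSeq (r ++ e) ∧ cent (r ++ e) = B by
    obtain ⟨e, he1, he2⟩ := h (Nat.card (cent ([] : List T))) [] centSeq_nil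
      (by rw [cent_nil]; exact le_top) (by simp) le_rfl
    exact ⟨[] ++ e, he1, he2⟩
  intro N
  induction N with
  | zero =>
    intro r hr hBr hrB hcard
    exfalso
    have : 0 < Nat.card (cent r) := Nat.card_pos
    omega
  | succ n ih =>
    intro r hr hBr hrB hcard
    by_cases hb : cent r = B
    · exact ⟨[], by simpa using hr, by simpa using hb⟩
    · -- there is b ∈ B cutting cent r properly
      have hex : ∃ b ∈ B, ∃ w ∈ cent r, ¬ Commute b w := by
        by_contra h
        push_neg at h
        apply hb
        refine le_antisymm ?_ hBr
        intro w hw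
        exact hsc w (fun b hbB => (h b hbB w hw).symm)
      obtain ⟨b, hbB, w, hw, hbw⟩ := hex
      have hlt : cent (r ++ [b]) < cent r := by
        rw [cent_snoc]
        rcases lt_or_eq_of_le (inf_le_left : cent r ⊓ Subgroup.centralizer {b} ≤ cent r)
          with h | h
        · exact h
        · exfalso
          apply hbw
          have : w ∈ cent r ⊓ Subgroup.centralizer {b} := by rw [h]; exact hw
          exact mem_centralizer_singleton_iff.mp this.2
      have hBr' : B ≤ cent (r ++ [b]) := by
        rw [cent_snoc]
        refine le_inf hBr ?_
        intro y hy
        exact mem_centralizer_singleton_iff.mpr (hcomm b hbB y hy)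
      have hcard' : Nat.card (cent (r ++ [b])) ≤ n := by
        have hmono : Nat.card (cent (r ++ [b])) < Nat.card (cent r) := by
          have hss : ((cent (r ++ [b]) : Subgroup T) : Set T) ⊂
              ((cent r : Subgroup T) : Set T) := by
            rw [Set.ssubset_def]
            refine ⟨fun z hz => le_of_lt hlt hz, fun hcon => ?_⟩
            obtain ⟨-, p, hp, hpn⟩ := SetLike.lt_iff_le_and_exists.mp hlt
            exact hpn (hcon hp)
          have := Set.ncard_lt_ncard hss (Set.toFinite _)
          rwa [← Nat.card_coe_set_eq, ← Nat.card_coe_set_eq] at this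
        omega
      have hrB' : ∀ x ∈ r ++ [b], x ∈ B := by
        intro x hx
        rcases List.mem_append.mp hx with h | h
        · exact hrB x h
        · rw [List.mem_singleton] at h
          rw [show x = b from h]
          exact hbB
      obtain ⟨e, he1, he2⟩ := ih (r ++ [b]) (centSeq_snoc hr hlt) hBr' hrB' hcard'
      exact ⟨[b] ++ e, by rwa [← List.append_assoc], by rwa [← List.append_assoc]⟩

/-- the closure of a pairwise-commuting set is pairwise commuting -/
lemma closure_comm {S : Set T} (hS : ∀ x ∈ S, ∀ y ∈ S, Commute x y) :
    ∀ x ∈ Subgroup.closure S, ∀ y ∈ Subgroup.closure S, Commute x y := by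
  have step1 : ∀ s ∈ S, ∀ y ∈ Subgroup.closure S, Commute s y := by
    intro s hs y hy
    have : Subgroup.closure S ≤ Subgroup.centralizer {s} := by
      rw [Subgroup.closure_le]
      intro z hz
      exact SetLike.mem_coe.mpr (mem_centralizer_singleton_iff.mpr (hS s hs z hz))
    exact mem_centralizer_singleton_iff.mp (this hy)
  intro x hx y hy
  have : Subgroup.closure S ≤ Subgroup.centralizer {y} := by
    rw [Subgroup.closure_le]
    intro z hz
    exact SetLike.mem_coe.mpr (mem_centralizer_singleton_iff.mpr (step1 z hz y hy).symm)
  exact (mem_centralizer_singleton_iff.mp (this hx)).symm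

/-- a maximal abelian subgroup: abelian and self-centralizing -/
def IsMaxAbelian (B : Subgroup T) : Prop :=
  (∀ x ∈ B, ∀ y ∈ B, Commute x y) ∧ ∀ w : T, (∀ b ∈ B, Commute w b) → w ∈ B

lemma exists_maxAbelian [Finite T] (A : Subgroup T)
    (hA : ∀ x ∈ A, ∀ y ∈ A, Commute x y) :
    ∃ B : Subgroup T, IsMaxAbelian B ∧ A ≤ B := by
  suffices h : ∀ (N : ℕ) (A : Subgroup T), (∀ x ∈ A, ∀ y ∈ A, Commute x y) →
      Nat.card T - Nat.card A ≤ N → ∃ B : Subgroup T, IsMaxAbelian B ∧ A ≤ B by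
    exact h (Nat.card T - Nat.card A) A hA le_rfl
  intro N
  induction N with
  | zero =>
    intro A hA hcard
    -- A is the whole group, hence self-centralizing
    have hAcard : Nat.card T ≤ Nat.card A := by omega
    have hAtop : A = ⊤ := by
      have h1 : ((A : Subgroup T) : Set T) = (Set.univ : Set T) := by
        apply Set.eq_of_subset_of_ncard_le (Set.subset_univ _)
        rw [← Nat.card_coe_set_eq, ← Nat.card_coe_set_eq]
        simpa [Nat.card_univ] using hAcard
      rw [eq_top_iff]
      intro x _
      have : x ∈ ((A : Subgroup T) : Set T) := by rw [h1]; trivial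
      exact this
    refine ⟨A, ⟨hA, fun w _ => ?_⟩, le_rfl⟩
    rw [hAtop]; trivial
  | succ n ih =>
    intro A hA hcard
    by_cases hsc : ∀ w : T, (∀ b ∈ A, Commute w b) → w ∈ A
    · exact ⟨A, ⟨hA, hsc⟩, le_rfl⟩
    · push_neg at hsc
      obtain ⟨w, hwcomm, hwA⟩ := hsc
      set A' := Subgroup.closure ((A : Set T) ∪ {w}) with hA'
      have hgen : ∀ x ∈ ((A : Set T) ∪ {w}), ∀ y ∈ ((A : Set T) ∪ {w}), Commute x y := by
        rintro x (hx | hx) y (hy | hy)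
        · exact hA x hx y hy
        · rw [Set.mem_singleton_iff] at hy
          rw [show y = w from hy]
          exact (hwcomm x hx).symm
        · rw [Set.mem_singleton_iff] at hx
          rw [show x = w from hx]
          exact hwcomm y hy
        · rw [Set.mem_singleton_iff] at hx hy
          rw [show x = w from hx, show y = w from hy]
      have hA'comm : ∀ x ∈ A', ∀ y ∈ A', Commute x y := closure_comm hgen
      have hle : A ≤ A' := by
        intro x hx
        exact Subgroup.subset_closure (Or.inl hx)
      have hwA' : w ∈ A' := Subgroup.subset_closure (Or.inr rfl)
      have hAA' : A < A' := lt_of_le_of_ne hle (fun h => hwA (h ▸ hwA'))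
      have hcard' : Nat.card T - Nat.card A' ≤ n := by
        have hmono : Nat.card A < Nat.card A' := by
          have hss : ((A : Subgroup T) : Set T) ⊂ ((A' : Subgroup T) : Set T) := by
            rw [Set.ssubset_def]
            exact ⟨fun z hz => hle hz, fun hcon => hwA (hcon hwA')⟩
          have := Set.ncard_lt_ncard hss (Set.toFinite _)
          rwa [← Nat.card_coe_set_eq, ← Nat.card_coe_set_eq] at this
        have hA'le : Nat.card A' ≤ Nat.card T := by
          have : ((A' : Subgroup T) : Set T) ⊆ (Set.univ : Set T) := Set.subset_univ _
          have h2 := Set.ncard_le_ncard this Set.finite_univ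
          rw [← Nat.card_coe_set_eq, ← Nat.card_coe_set_eq] at h2
          simpa [Nat.card_univ] using h2
        omega
      obtain ⟨B, hB, hB2⟩ := ih A' hA'comm hcard'
      exact ⟨B, hB, le_trans hle hB2⟩

/-- the "class" of `x`: the centre of its centralizer, i.e. the second centralizer -/
def Kcl (x : T) : Subgroup T :=
  Subgroup.centralizer ((Subgroup.centralizer {x} : Subgroup T) : Set T)

lemma mem_Kcl {x w : T} : w ∈ Kcl x ↔ ∀ u, Commute x u → Commute u w := by
  rw [Kcl, Subgroup.mem_centralizer_iff]
  constructor
  · intro h u hu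
    rw [commute_iff_eq]
    exact h u (mem_centralizer_singleton_iff.mpr hu)
  · intro h u hu
    exact ((h u (mem_centralizer_singleton_iff.mp hu))).eq

lemma self_mem_Kcl (x : T) : x ∈ Kcl x :=
  mem_Kcl.mpr fun _ hu => hu.symm

lemma pow_mem_Kcl (x : T) (n : ℕ) : x ^ n ∈ Kcl x :=
  mem_Kcl.mpr fun _ hu => (hu.symm).pow_right n

lemma centralizer_le_of_mem_Kcl {x z : T} (hz : z ∈ Kcl x) :
    Subgroup.centralizer {x} ≤ Subgroup.centralizer {z} := by
  intro w hw
  exact mem_centralizer_singleton_iff.mpr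
    ((mem_Kcl.mp hz) w (mem_centralizer_singleton_iff.mp hw)).symm

lemma Kcl_congr {x z : T}
    (h : Subgroup.centralizer {x} = Subgroup.centralizer {z}) : Kcl x = Kcl z := by
  rw [Kcl, Kcl, h]

lemma centralizer_inv (x : T) :
    Subgroup.centralizer {x⁻¹} = Subgroup.centralizer {x} := by
  ext w
  rw [mem_centralizer_singleton_iff, mem_centralizer_singleton_iff]
  constructor
  · intro h
    have := h.inv_left
    rwa [inv_inv] at this
  · intro h
    exact h.inv_left

section World

variable (T) in
/-- no strict inclusions between centralizers of nontrivial elements -/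
def NoCompCent : Prop :=
  ∀ u v : T, u ≠ 1 → v ≠ 1 →
    Subgroup.centralizer {u} ≤ Subgroup.centralizer {v} →
    Subgroup.centralizer {u} = Subgroup.centralizer {v}

variable (T) in
/-- no centralizer of a nontrivial element is abelian -/
def NoAbCent : Prop :=
  ∀ v : T, v ≠ 1 → ∃ x ∈ Subgroup.centralizer {v},
    ∃ y ∈ Subgroup.centralizer {v}, ¬ Commute x y

lemma centralizer_eq_of_mem_Kcl (hNC : NoCompCent T) {x z : T}
    (hx : x ≠ 1) (hz : z ≠ 1) (h : z ∈ Kcl x) :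
    Subgroup.centralizer {x} = Subgroup.centralizer {z} :=
  hNC x z hx hz (centralizer_le_of_mem_Kcl h)

/-- the key order-comparison lemma inside a maximal abelian subgroup -/
lemma orderOf_dvd_of_ne_cent [Finite T] (hNC : NoCompCent T) {B : Subgroup T}
    (hB : IsMaxAbelian B)
    {x y : T} (hxB : x ∈ B) (hyB : y ∈ B) (hx1 : x ≠ 1) (hy1 : y ≠ 1)
    (hne : Subgroup.centralizer {x} ≠ Subgroup.centralizer {y}) :
    orderOf x ∣ orderOf y := by
  set n := orderOf y with hn
  set z := x * y with hz
  have hzB : z ∈ B := mul_mem hxB hyB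
  have hz1 : z ≠ 1 := by
    intro h
    apply hne
    have hyx : y = x⁻¹ := eq_inv_of_mul_eq_one_right (hz ▸ h)
    rw [hyx, centralizer_inv]
  have hxy : Commute x y := hB.1 x hxB y hyB
  apply orderOf_dvd_of_pow_eq_one
  by_contra hp
  have h2 : z ^ n = x ^ n := by
    rw [hz, hxy.mul_pow, hn, pow_orderOf_eq_one, mul_one]
  have hCx : Subgroup.centralizer {x} = Subgroup.centralizer {x ^ n} :=
    centralizer_eq_of_mem_Kcl hNC hx1 hp (pow_mem_Kcl x n)
  have hCz : Subgroup.centralizer {z} = Subgroup.centralizer {x ^ n} := by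
    have := pow_mem_Kcl z n
    rw [h2] at this
    exact centralizer_eq_of_mem_Kcl hNC hz1 hp this
  have hCxz : Subgroup.centralizer {x} = Subgroup.centralizer {z} := by
    rw [hCx, hCz]
  have hyK : y ∈ Kcl x := by
    have hx' : x ∈ Kcl x := self_mem_Kcl x
    have hz' : z ∈ Kcl x := by
      rw [Kcl_congr hCxz]
      exact self_mem_Kcl z
    have : x⁻¹ * z ∈ Kcl x := mul_mem (inv_mem hx') hz'
    rwa [hz, inv_mul_cancel_left] at this
  exact hne (centralizer_eq_of_mem_Kcl hNC hx1 hy1 hyK)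

lemma orderOf_eq_of_ne_cent [Finite T] (hNC : NoCompCent T) {B : Subgroup T}
    (hB : IsMaxAbelian B)
    {x y : T} (hxB : x ∈ B) (hyB : y ∈ B) (hx1 : x ≠ 1) (hy1 : y ≠ 1)
    (hne : Subgroup.centralizer {x} ≠ Subgroup.centralizer {y}) :
    orderOf x = orderOf y :=
  Nat.dvd_antisymm (orderOf_dvd_of_ne_cent hNC hB hxB hyB hx1 hy1 hne)
    (orderOf_dvd_of_ne_cent hNC hB hyB hxB hy1 hx1 (Ne.symm hne))

/-- a nontrivial maximal abelian subgroup contains elements with two distinct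
centralizers -/
lemma exists_two_cent (hNA : NoAbCent T) {B : Subgroup T}
    (hB : IsMaxAbelian B) (hBne : B ≠ ⊥) :
    ∃ x ∈ B, ∃ y ∈ B, x ≠ 1 ∧ y ≠ 1 ∧
      Subgroup.centralizer {x} ≠ Subgroup.centralizer {y} := by
  have hex : ∃ x ∈ B, x ≠ (1 : T) := by
    by_contra h
    push_neg at h
    exact hBne ((Subgroup.eq_bot_iff_forall _).mpr h)
  obtain ⟨x₀, hx₀B, hx₀1⟩ := hex
  by_contra hcon
  push_neg at hcon
  have hle : B ≤ Subgroup.centralizer {x₀} := fun b hbB =>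
    mem_centralizer_singleton_iff.mpr (hB.1 x₀ hx₀B b hbB)
  have hBle : B < Subgroup.centralizer {x₀} := by
    rcases lt_or_eq_of_le hle with h | h
    · exact h
    · exfalso
      obtain ⟨u, hu, v, hv, huv⟩ := hNA x₀ hx₀1
      rw [← h] at hu hv
      exact huv (hB.1 u hu v hv)
  obtain ⟨t, ht, htB⟩ := SetLike.exists_of_lt hBle
  apply htB
  apply hB.2
  intro b hbB
  by_cases hb1 : b = 1
  · rw [hb1]; exact Commute.one_right t
  · have hcc : Subgroup.centralizer {x₀} = Subgroup.centralizer {b} :=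
      hcon x₀ hx₀B b hbB hx₀1 hb1
    have : t ∈ Subgroup.centralizer {b} := by rw [← hcc]; exact ht
    exact (mem_centralizer_singleton_iff.mp this).symm

/-- all nontrivial elements of a nontrivial maximal abelian subgroup have the
same prime order -/
lemma exists_prime_order [Finite T] (hNC : NoCompCent T) (hNA : NoAbCent T)
    {B : Subgroup T} (hB : IsMaxAbelian B) (hBne : B ≠ ⊥) :
    ∃ p : ℕ, p.Prime ∧ ∀ x ∈ B, x ≠ 1 → orderOf x = p := by
  obtain ⟨x₁, hx₁B, y₁, hy₁B, hx₁1, hy₁1, hcne⟩ := exists_two_cent hNA hB hBne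
  set n := orderOf x₁ with hn
  have hconst : ∀ x ∈ B, x ≠ 1 → orderOf x = n := by
    intro x hxB hx1
    by_cases hcc : Subgroup.centralizer {x} = Subgroup.centralizer {x₁}
    · have h1 : Subgroup.centralizer {x} ≠ Subgroup.centralizer {y₁} := by
        rw [hcc]; exact hcne
      have h2 := orderOf_eq_of_ne_cent hNC hB hxB hy₁B hx1 hy₁1 h1
      have h3 := orderOf_eq_of_ne_cent hNC hB hx₁B hy₁B hx₁1 hy₁1 hcne
      rw [h2, ← h3]
    · exact orderOf_eq_of_ne_cent hNC hB hxB hx₁B hx1 hx₁1 hcc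
  have hn1 : n ≠ 1 := by
    intro h
    exact hx₁1 (orderOf_eq_one_iff.mp (hn ▸ h))
  have hn0 : 0 < n := hn ▸ orderOf_pos x₁
  set q := n.minFac with hq
  have hqp : q.Prime := Nat.minFac_prime hn1
  have hqdvd : q ∣ n := Nat.minFac_dvd n
  set x' := x₁ ^ (n / q) with hx'
  have horder : orderOf x' = q := by
    rw [hx', orderOf_pow, ← hn]
    have hdvd : n / q ∣ n := Nat.div_dvd_of_dvd hqdvd
    rw [Nat.gcd_eq_right hdvd]
    exact Nat.div_div_self hqdvd (by omega)
  have hx'1 : x' ≠ 1 := by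
    intro h
    rw [h, orderOf_one] at horder
    exact hqp.one_lt.ne' horder.symm
  have hx'B : x' ∈ B := pow_mem hx₁B _
  have := hconst x' hx'B hx'1
  rw [horder] at this
  exact ⟨n, this ▸ hqp, hconst⟩

end World

section MainProof

lemma center_eq_bot (hsimple : IsSimpleGroup T)
    (hnonabelian : ¬ ∀ a b : T, a * b = b * a) : Subgroup.center T = ⊥ := by
  rcases hsimple.eq_bot_or_eq_top_of_normal (Subgroup.center T) inferInstance with h | h
  · exact h
  · exfalso
    apply hnonabelian
    intro a b
    have hb : b ∈ Subgroup.center T := by rw [h]; trivial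
    exact Subgroup.mem_center_iff.mp hb a

/-- two bases whose underlying centralizer data have different lengths
contradict the IBIS property -/
lemma ibis_absurd [Nontrivial T] (hIBIS : IsIBIS (T × T) T) {r₁ r₂ : List T}
    (h₁s : CentSeq r₁) (h₁b : cent r₁ = ⊥) (h₂s : CentSeq r₂) (h₂b : cent r₂ = ⊥)
    (hlen : r₁.length ≠ r₂.length) : False := by
  have e₁ : IsIrredundantBase (T × T) ((1 : T) :: r₁) :=
    ⟨isIrredundantSeq_one_cons h₁s, stab_bot_iff.mpr h₁b⟩
  have e₂ : IsIrredundantBase (T × T) ((1 : T) :: r₂) :=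
    ⟨isIrredundantSeq_one_cons h₂s, stab_bot_iff.mpr h₂b⟩
  have := hIBIS _ _ e₁ e₂
  simp only [List.length_cons] at this
  omega

theorem isCT_of_isIBIS [Finite T] (hsimple : IsSimpleGroup T)
    (hnonabelian : ¬ ∀ a b : T, a * b = b * a)
    (hIBIS : IsIBIS (T × T) T) : IsCTGroup T := by
  haveI : Nontrivial T := hsimple.toNontrivial
  have hZ : Subgroup.center T = ⊥ := center_eq_bot hsimple hnonabelian
  intro a b c ha hb hc hab hbc
  by_contra hac
  -- Step 1 : no strict inclusions between centralizers.
  have hNC : NoCompCent T := by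
    intro u v hu hv hle
    by_contra hne
    have hlt : Subgroup.centralizer {u} < Subgroup.centralizer {v} :=
      lt_of_le_of_ne hle hne
    have hseq_u : CentSeq [u] := by
      intro j hj
      simp only [List.length_singleton] at hj
      have hj0 : j = 0 := by omega
      subst hj0
      rw [show ([u] : List T).take 1 = [u] from rfl,
        show ([u] : List T).take 0 = ([] : List T) from rfl, cent_singleton, cent_nil]
      exact centralizer_lt_top hZ hu
    obtain ⟨e, he1, he2, -⟩ := exists_cent_bot hZ (Nat.card (cent [u])) [u] hseq_u le_rfl
    have habs : ∀ s : List T, cent (v :: u :: s) = cent (u :: s) := by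
      intro s
      ext w
      rw [mem_cent, mem_cent]
      constructor
      · intro h x hx
        exact h x (by simp only [List.mem_cons] at hx ⊢; tauto)
      · intro h x hx
        simp only [List.mem_cons] at hx
        rcases hx with rfl | hx
        · have hwu : w ∈ Subgroup.centralizer {u} :=
            mem_centralizer_singleton_iff.mpr (h u (by simp))
          exact mem_centralizer_singleton_iff.mp (hle hwu)
        · exact h x (by simp only [List.mem_cons]; tauto)
    have hseq_vu : CentSeq (v :: ([u] ++ e)) := by
      intro j hj
      simp only [List.length_cons, List.length_append, List.length_singleton, List.length_nil] at hj
      match j with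
      | 0 =>
        rw [show (v :: ([u] ++ e)).take 1 = [v] from rfl,
          show (v :: ([u] ++ e)).take 0 = ([] : List T) from rfl, cent_singleton, cent_nil]
        exact centralizer_lt_top hZ hv
      | 1 =>
        rw [show (v :: ([u] ++ e)).take 2 = v :: u :: ([] : List T) from rfl,
          show (v :: ([u] ++ e)).take 1 = [v] from rfl, habs [], cent_singleton,
          cent_singleton]
        exact hlt
      | (k + 2) =>
        rw [show (v :: ([u] ++ e)).take (k + 2 + 1) = v :: u :: e.take (k + 1) from rfl,
          show (v :: ([u] ++ e)).take (k + 2) = v :: u :: e.take k from rfl,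
          habs (e.take (k + 1)), habs (e.take k)]
        have hk : k + 1 < ([u] ++ e : List T).length := by
          simp only [List.length_append, List.length_singleton, List.length_cons,
            List.length_nil]
          omega
        have := he1 (k + 1) hk
        rwa [show ([u] ++ e : List T).take (k + 1 + 1) = u :: e.take (k + 1) from rfl,
          show ([u] ++ e : List T).take (k + 1) = u :: e.take k from rfl] at this
    have hbot_vu : cent (v :: ([u] ++ e)) = ⊥ := by
      have : cent (v :: ([u] ++ e)) = cent ([u] ++ e) := habs e
      rw [this, he2]
    exact ibis_absurd hIBIS he1 he2 hseq_vu hbot_vu (by simp)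
  -- Step 2 : case analysis on whether some centralizer is abelian.
  by_cases habel : ∃ v : T, v ≠ 1 ∧ ∀ x ∈ Subgroup.centralizer {v},
      ∀ y ∈ Subgroup.centralizer {v}, Commute x y
  · -- an abelian centralizer gives a base of length 3
    obtain ⟨v, hv, hvab⟩ := habel
    obtain ⟨g, -, hgv⟩ := SetLike.exists_of_lt (centralizer_lt_top hZ hv)
    have hCvne : Subgroup.centralizer {v} ≠ ⊥ := by
      intro h
      apply hv
      have : v ∈ Subgroup.centralizer {v} :=
        mem_centralizer_singleton_iff.mpr (Commute.refl v)
      rwa [h, Subgroup.mem_bot] at this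
    have hdisj : Subgroup.centralizer {v} ⊓ Subgroup.centralizer {g} = ⊥ := by
      rw [Subgroup.eq_bot_iff_forall]
      intro z hz
      by_contra hz1
      have hCvz : Subgroup.centralizer {v} ≤ Subgroup.centralizer {z} := by
        intro w hw
        exact mem_centralizer_singleton_iff.mpr (hvab z hz.1 w hw)
      have hcc := hNC v z hv hz1 hCvz
      apply hgv
      rw [hcc]
      exact mem_centralizer_singleton_iff.mpr
        ((mem_centralizer_singleton_iff.mp hz.2).symm)
    have hcent_vg : cent [v, g] = ⊥ := by
      rw [show ([v, g] : List T) = [v] ++ [g] from rfl, cent_snoc, cent_singleton]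
      exact hdisj
    have hseq_vg : CentSeq [v, g] := by
      intro j hj
      simp only [List.length_cons, List.length_singleton] at hj
      match j with
      | 0 =>
        rw [show ([v, g] : List T).take 1 = [v] from rfl,
          show ([v, g] : List T).take 0 = ([] : List T) from rfl, cent_singleton, cent_nil]
        exact centralizer_lt_top hZ hv
      | 1 =>
        rw [show ([v, g] : List T).take 2 = [v, g] from rfl,
          show ([v, g] : List T).take 1 = [v] from rfl, hcent_vg, cent_singleton]
        exact bot_lt_iff_ne_bot.mpr hCvne
    -- the CT-violation gives a base of length at least 4
    have hcent_ac_ne : cent [a, c] ≠ ⊥ := by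
      intro h
      have hbmem : b ∈ cent [a, c] := by
        rw [mem_cent]
        intro x hx
        simp only [List.mem_cons, List.mem_singleton, List.not_mem_nil, or_false] at hx
        rcases hx with rfl | rfl
        · exact hab
        · exact hbc.symm
      rw [h, Subgroup.mem_bot] at hbmem
      exact hb hbmem
    have hseq_ac : CentSeq [a, c] := by
      intro j hj
      simp only [List.length_cons, List.length_singleton] at hj
      match j with
      | 0 =>
        rw [show ([a, c] : List T).take 1 = [a] from rfl,
          show ([a, c] : List T).take 0 = ([] : List T) from rfl, cent_singleton, cent_nil]
        exact centralizer_lt_top hZ ha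
      | 1 =>
        rw [show ([a, c] : List T).take 2 = [a, c] from rfl,
          show ([a, c] : List T).take 1 = [a] from rfl]
        have hle : cent [a, c] ≤ cent [a] := by
          intro w hw
          rw [mem_cent] at hw ⊢
          intro x hx
          apply hw
          simp only [List.mem_cons, List.mem_singleton] at hx ⊢
          tauto
        refine lt_of_le_of_ne hle ?_
        intro heq
        have hamem : a ∈ cent [a, c] := by
          rw [heq, cent_singleton]
          exact mem_centralizer_singleton_iff.mpr (Commute.refl a)
        rw [mem_cent] at hamem
        exact hac ((hamem c (by simp)).symm)
    obtain ⟨e', he'1, he'2, he'3⟩ :=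
      exists_cent_bot hZ (Nat.card (cent [a, c])) [a, c] hseq_ac le_rfl
    have hgrow := he'3 hcent_ac_ne
    refine ibis_absurd hIBIS hseq_vg hcent_vg he'1 he'2 ?_
    simp only [List.length_cons, List.length_append, List.length_singleton,
      List.length_nil] at hgrow ⊢
    omega
  · -- all centralizers are non-abelian : derive that T is a p-group, contradiction
    push_neg at habel
    have hNA : NoAbCent T := fun v hv => habel v hv
    -- the covering property
    have hCOV : ∀ B : Subgroup T, IsMaxAbelian B → B ≠ ⊥ →
        ∀ g : T, ∃ z ∈ B, z ≠ 1 ∧ Commute g z := by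
      intro B hB hBne g
      by_contra hcon
      push_neg at hcon
      have hdisj : B ⊓ Subgroup.centralizer {g} = ⊥ := by
        rw [Subgroup.eq_bot_iff_forall]
        intro z hz
        by_contra hz1
        exact hcon z hz.1 hz1 (mem_centralizer_singleton_iff.mp hz.2)
      have hex : ∃ x ∈ B, x ≠ (1 : T) := by
        by_contra h
        push_neg at h
        exact hBne ((Subgroup.eq_bot_iff_forall _).mpr h)
      obtain ⟨x, hxB, hx1⟩ := hex
      have hle : B ≤ Subgroup.centralizer {x} := fun b hbB =>
        mem_centralizer_singleton_iff.mpr (hB.1 x hxB b hbB)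
      have hBlt : B < Subgroup.centralizer {x} := by
        rcases lt_or_eq_of_le hle with h | h
        · exact h
        · exfalso
          obtain ⟨u', hu', v', hv', huv'⟩ := hNA x hx1
          rw [← h] at hu' hv'
          exact huv' (hB.1 u' hu' v' hv')
      obtain ⟨t, htC, htB⟩ := SetLike.exists_of_lt hBlt
      have htx : x ∈ B ⊓ Subgroup.centralizer {t} := by
        refine ⟨hxB, mem_centralizer_singleton_iff.mpr ?_⟩
        exact (mem_centralizer_singleton_iff.mp htC).symm
      have htne : B ⊓ Subgroup.centralizer {t} ≠ ⊥ := by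
        intro h
        rw [h, Subgroup.mem_bot] at htx
        exact hx1 htx
      have htlt : B ⊓ Subgroup.centralizer {t} < B := by
        rcases lt_or_eq_of_le (inf_le_left : B ⊓ Subgroup.centralizer {t} ≤ B) with h | h
        · exact h
        · exfalso
          apply htB
          apply hB.2
          intro b hbB
          have : b ∈ B ⊓ Subgroup.centralizer {t} := by rw [h]; exact hbB
          exact mem_centralizer_singleton_iff.mp this.2
      obtain ⟨r, hr1, hr2⟩ := exists_cent_eq B hB.1 hB.2
      have hBneb : (⊥ : Subgroup T) < B := bot_lt_iff_ne_bot.mpr hBne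
      -- first base : r ++ [g]
      have hb1 : cent (r ++ [g]) = ⊥ := by
        rw [cent_snoc, hr2]
        exact hdisj
      have hb1lt : cent (r ++ [g]) < cent r := by
        rw [hb1, hr2]
        exact hBneb
      have hseq1 : CentSeq (r ++ [g]) := centSeq_snoc hr1 hb1lt
      -- second base : (r ++ [t]) ++ [g]
      have hb2a : cent (r ++ [t]) = B ⊓ Subgroup.centralizer {t} := by
        rw [cent_snoc, hr2]
      have hb2alt : cent (r ++ [t]) < cent r := by
        rw [hb2a, hr2]
        exact htlt
      have hseq2a : CentSeq (r ++ [t]) := centSeq_snoc hr1 hb2alt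
      have hb2 : cent ((r ++ [t]) ++ [g]) = ⊥ := by
        rw [cent_snoc, hb2a]
        rw [Subgroup.eq_bot_iff_forall]
        intro z hz
        have : z ∈ B ⊓ Subgroup.centralizer {g} := ⟨hz.1.1, hz.2⟩
        rwa [hdisj, Subgroup.mem_bot] at this
      have hb2lt : cent ((r ++ [t]) ++ [g]) < cent (r ++ [t]) := by
        rw [hb2, hb2a]
        exact bot_lt_iff_ne_bot.mpr htne
      have hseq2 : CentSeq ((r ++ [t]) ++ [g]) := centSeq_snoc hseq2a hb2lt
      refine ibis_absurd hIBIS hseq1 hb1 hseq2 hb2 ?_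
      simp only [List.length_append, List.length_singleton, List.length_cons,
        List.length_nil]
      omega
    -- a fixed maximal abelian subgroup and its prime
    obtain ⟨x₀, hx₀⟩ := exists_ne (1 : T)
    have hA₀comm : ∀ x ∈ Subgroup.closure ({x₀} : Set T),
        ∀ y ∈ Subgroup.closure ({x₀} : Set T), Commute x y := by
      apply closure_comm
      intro x hx y hy
      rw [Set.mem_singleton_iff] at hx hy
      rw [show x = x₀ from hx, show y = x₀ from hy]
    obtain ⟨B₀, hB₀, hA₀B₀⟩ := exists_maxAbelian _ hA₀comm
    have hx₀B₀ : x₀ ∈ B₀ := hA₀B₀ (Subgroup.subset_closure rfl)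
    have hB₀ne : B₀ ≠ ⊥ := by
      intro h
      rw [h, Subgroup.mem_bot] at hx₀B₀
      exact hx₀ hx₀B₀
    obtain ⟨p, hp, hpord⟩ := exists_prime_order hNC hNA hB₀ hB₀ne
    -- every nontrivial element has order p
    have hall : ∀ g : T, g ≠ 1 → orderOf g = p := by
      intro g hg
      obtain ⟨z, hzB₀, hz1, hgz⟩ := hCOV B₀ hB₀ hB₀ne g
      have hA₁comm : ∀ x ∈ Subgroup.closure ({g, z} : Set T),
          ∀ y ∈ Subgroup.closure ({g, z} : Set T), Commute x y := by
        apply closure_comm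
        intro x hx y hy
        simp only [Set.mem_insert_iff, Set.mem_singleton_iff] at hx hy
        rcases hx with rfl | rfl <;> rcases hy with rfl | rfl
        · exact Commute.refl _
        · exact hgz
        · exact hgz.symm
        · exact Commute.refl _
      obtain ⟨B', hB', hA₁B'⟩ := exists_maxAbelian _ hA₁comm
      have hgB' : g ∈ B' := hA₁B' (Subgroup.subset_closure (Or.inl rfl))
      have hzB' : z ∈ B' := hA₁B' (Subgroup.subset_closure (Or.inr rfl))
      have hB'ne : B' ≠ ⊥ := by
        intro h
        rw [h, Subgroup.mem_bot] at hzB'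
        exact hz1 hzB'
      obtain ⟨q, hq, hqord⟩ := exists_prime_order hNC hNA hB' hB'ne
      calc orderOf g = q := hqord g hgB' hg
        _ = orderOf z := (hqord z hzB' hz1).symm
        _ = p := hpord z hzB₀ hz1
    -- T is a p-group with trivial centre, contradiction
    have hPG : IsPGroup p T := by
      intro g
      by_cases hg : g = 1
      · exact ⟨0, by rw [hg]; simp⟩
      · exact ⟨1, by rw [pow_one, ← hall g hg, pow_orderOf_eq_one]⟩
    haveI : Fact p.Prime := ⟨hp⟩
    have hcn : Nontrivial (Subgroup.center T) := hPG.center_nontrivial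
    rw [hZ] at hcn
    obtain ⟨⟨z₁, hz₁⟩, ⟨z₂, hz₂⟩, hnz⟩ := hcn
    apply hnz
    rw [Subgroup.mem_bot] at hz₁ hz₂
    exact Subtype.ext (hz₁.trans hz₂.symm)

end MainProof

end DiagIBIS

open DiagIBIS in
/-- For a finite non-abelian simple group `T`, the action of `T × T` on `T` by
`(a, b) • x = a * x * b⁻¹` is IBIS if and only if `T` is a CT-group. -/
theorem diagAction_isIBIS_iff_isCTGroup
    (T : Type*) [Group T] [Finite T] (hsimple : IsSimpleGroup T)
    (hnonabelian : ¬ ∀ a b : T, a * b = b * a) :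
    IsIBIS (T × T) T ↔ IsCTGroup T := by
  haveI : Nontrivial T := hsimple.toNontrivial
  constructor
  · exact isCT_of_isIBIS hsimple hnonabelian
  · intro hCT l₁ l₂ h₁ h₂
    rw [ct_base_length hCT l₁ h₁, ct_base_length hCT l₂ h₂]
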